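/- If two b-linked geodesics c_{x₁}, c_{x₂} of positive discriminants D₁, D₂ in the hyperbolic plane do not intersect (i.e., b² ≥ D₁D₂ with b > 0), then their hyperbolic distance d satisfies cosh(d) = b/√(D₁D₂). -/

import Mathlib

set_option maxHeartbeats 1000000

noncomputable section

/-- the bilinear form of signature `(2,1)` on `ℝ³` (Minkowski model), with `Q(x) = B(x,x)`. -/
def mB (x y : Fin 3 → ℝ) : ℝ := x 0 * y 0 + x 1 * y 1 - x 2 * y 2

/-- inverse hyperbolic cosine -/
def arcosh (x : ℝ) : ℝ := Real.log (x + Real.sqrt (x ^ 2 - 1))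

lemma mB_comm (p q : Fin 3 → ℝ) : mB p q = mB q p := by simp only [mB]; ring

lemma revCS (u w : Fin 3 → ℝ) (hu : mB u u = -1) (hw : mB w w = -1)
    (hu2 : 0 < u 2) (hw2 : 0 < w 2) : mB u w ≤ -1 := by
  simp only [mB] at *
  have h1 : 1 ≤ u 2 := by nlinarith [sq_nonneg (u 0), sq_nonneg (u 1)]
  have h2 : 1 ≤ w 2 := by nlinarith [sq_nonneg (w 0), sq_nonneg (w 1)]
  have key : (u 0 * w 0 + u 1 * w 1)^2 ≤ (u 2 * w 2 - 1)^2 := by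
    nlinarith [sq_nonneg (u 0 * w 1 - u 1 * w 0), sq_nonneg (u 2 - w 2)]
  have h3 : (0:ℝ) ≤ u 2 * w 2 - 1 := by nlinarith
  rcases le_or_gt (u 0 * w 0 + u 1 * w 1) 0 with h | h
  · nlinarith
  · nlinarith [key, h3, h]

lemma arcosh_mono {a c : ℝ} (ha : 1 ≤ a) (hac : a ≤ c) : arcosh a ≤ arcosh c := by
  unfold arcosh
  apply Real.log_le_log (by positivity)
  have : Real.sqrt (a^2-1) ≤ Real.sqrt (c^2-1) := Real.sqrt_le_sqrt (by nlinarith)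
  linarith

lemma gram3 (a c d : Fin 3 → ℝ) :
    (mB a a)*(mB c c)*(mB d d) + 2*(mB a c)*(mB c d)*(mB a d)
      - (mB a a)*(mB c d)^2 - (mB c c)*(mB a d)^2 - (mB d d)*(mB a c)^2
    = -(a 0*(c 1*d 2 - c 2*d 1) - a 1*(c 0*d 2 - c 2*d 0) + a 2*(c 0*d 1 - c 1*d 0))^2 := by
  simp only [mB]; ring

lemma tn (a0 a1 a2 l0 l1 l2 : ℝ) (h : a0^2 + a1^2 - a2^2 < 0) (ha : 0 < a2)
    (hl : l0^2 + l1^2 = l2^2) : (a0*l0 + a1*l1 - a2*l2) * l2 ≤ 0 := by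
  rcases lt_trichotomy l2 0 with h2 | h2 | h2
  · have key : (a0*l0 + a1*l1)^2 ≤ (a2*l2)^2 := by
      nlinarith [sq_nonneg (a0*l1 - a1*l0)]
    have hY : 0 < a2 * (-l2) := mul_pos ha (neg_pos.mpr h2)
    have hX : a2 * l2 ≤ a0*l0 + a1*l1 := by
      by_contra hX
      push_neg at hX
      nlinarith [key, hY]
    nlinarith [hX, h2]
  · rw [h2]; simp
  · have key : (a0*l0 + a1*l1)^2 ≤ (a2*l2)^2 := by
      nlinarith [sq_nonneg (a0*l1 - a1*l0)]
    have hY : 0 < a2 * l2 := mul_pos ha h2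
    have hX : a0*l0 + a1*l1 ≤ a2 * l2 := by
      by_contra hX
      push_neg at hX
      nlinarith [key, hY]
    nlinarith [hX, h2]

lemma arcosh_one : arcosh 1 = 0 := by unfold arcosh; norm_num

lemma arcosh_sqrt_le {δ : ℝ} (h : 0 ≤ δ) :
    arcosh (Real.sqrt (1+δ)) ≤ δ + Real.sqrt δ := by
  unfold arcosh
  have hs := Real.sq_sqrt (show (0:ℝ) ≤ 1+δ by linarith)
  have hn := Real.sqrt_nonneg (1+δ)
  have h1 : Real.sqrt (1+δ)^2 - 1 = δ := by rw [hs]; ring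
  rw [h1]
  have h2 : 1 ≤ Real.sqrt (1+δ) := by nlinarith
  have h3 : 0 < Real.sqrt (1+δ) + Real.sqrt δ := by
    have := Real.sqrt_nonneg δ; linarith
  have h4 : Real.sqrt (1+δ) ≤ 1 + δ := by nlinarith
  have h5 := Real.log_le_sub_one_of_pos h3
  linarith

/-- foot of the perpendicular from `u` to the geodesic `c_{x₂}` -/
lemma foot (x₂ : Fin 3 → ℝ) (D₂ : ℝ) (h2 : mB x₂ x₂ = D₂) (hD2 : 0 < D₂)
    (u : Fin 3 → ℝ) (huu : mB u u = -1) (hu2 : 0 < u 2) :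
    ∃ w, mB w w = -1 ∧ 0 < w 2 ∧ mB x₂ w = 0 ∧
      -(mB u w) = Real.sqrt (1 + (mB x₂ u)^2/D₂) := by
  set τ : ℝ := mB x₂ u with hτ
  set π : Fin 3 → ℝ := fun i => u i - (τ/D₂) * x₂ i with hπdef
  have hD2' : D₂ ≠ 0 := ne_of_gt hD2
  have hππ : mB π π = -(1 + τ^2/D₂) := by
    have e : mB π π = mB u u - 2*(τ/D₂)*(mB x₂ u) + (τ/D₂)^2 * (mB x₂ x₂) := by
      simp only [hπdef, mB]; ring
    rw [e, huu, h2, ← hτ]; field_simp; ring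
  have hx2π : mB x₂ π = 0 := by
    have e : mB x₂ π = mB x₂ u - (τ/D₂) * (mB x₂ x₂) := by
      simp only [hπdef, mB]; ring
    rw [e, h2, ← hτ]; field_simp; ring
  have huπ : mB u π = -(1 + τ^2/D₂) := by
    have e : mB u π = mB u u - (τ/D₂) * (mB u x₂) := by
      simp only [hπdef, mB]; ring
    rw [e, huu, mB_comm u x₂, ← hτ]; field_simp; ring
  have hNpos : 0 < Real.sqrt (1 + τ^2/D₂) := Real.sqrt_pos.mpr (by positivity)
  set N : ℝ := Real.sqrt (1 + τ^2/D₂) with hN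
  have hN2 : N^2 = 1 + τ^2/D₂ := Real.sq_sqrt (by positivity)
  have hNne : N ≠ 0 := ne_of_gt hNpos
  have hπ2 : π 2 ≠ 0 := by
    intro h0
    have e : mB π π = π 0 * π 0 + π 1 * π 1 - π 2 * π 2 := rfl
    rw [hππ, h0] at e
    nlinarith [sq_nonneg (π 0), sq_nonneg (π 1), div_nonneg (sq_nonneg τ) hD2.le]
  obtain ⟨s, hs2, hsπ2⟩ : ∃ s : ℝ, s^2 = 1 ∧ 0 < s * π 2 := by
    rcases lt_trichotomy (π 2) 0 with h|h|h
    · exact ⟨-1, by norm_num, by nlinarith⟩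
    · exact absurd h hπ2
    · exact ⟨1, by norm_num, by nlinarith⟩
  set w : Fin 3 → ℝ := fun i => (s/N) * π i with hwdef
  have hww : mB w w = -1 := by
    have e : mB w w = (s/N)^2 * mB π π := by simp only [hwdef, mB]; ring
    rw [e, hππ, ← hN2, div_pow, hs2]
    field_simp
  have hw2 : 0 < w 2 := by
    have e : w 2 = (s * π 2)/N := by simp only [hwdef]; ring
    rw [e]; positivity
  have hx2w : mB x₂ w = 0 := by
    have e : mB x₂ w = (s/N) * mB x₂ π := by simp only [hwdef, mB]; ring
    rw [e, hx2π, mul_zero]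
  have huw : mB u w = -(s*N) := by
    have e : mB u w = (s/N) * mB u π := by simp only [hwdef, mB]; ring
    rw [e, huπ, ← hN2]
    field_simp
  have hle := revCS u w huu hww hu2 hw2
  rw [huw] at hle
  have hs1 : s = 1 := by
    have : (s - 1) * (s + 1) = 0 := by linear_combination hs2
    rcases mul_eq_zero.mp this with h | h
    · linarith
    · exfalso; have : s = -1 := by linarith
      rw [this] at hle; nlinarith
  refine ⟨w, hww, hw2, hx2w, ?_⟩
  rw [huw, hs1, one_mul, neg_neg, hN, hτ]


lemma lowerBound (x₁ x₂ : Fin 3 → ℝ) (D₁ D₂ b : ℝ)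
    (h1 : mB x₁ x₁ = D₁) (h2 : mB x₂ x₂ = D₂) (hD1 : 0 < D₁) (hD2 : 0 < D₂)
    (hb : mB x₁ x₂ = b)
    (u w : Fin 3 → ℝ) (huu : mB u u = -1) (hu2 : 0 < u 2) (hx1u : mB x₁ u = 0)
    (hww : mB w w = -1) (hw2 : 0 < w 2) (hx2w : mB x₂ w = 0) :
    b^2 ≤ (D₁*D₂) * (mB u w)^2 ∧ mB u w ≤ -1 := by
  have hm := revCS u w huu hww hu2 hw2
  refine ⟨?_, hm⟩
  have g1 := gram3 x₁ x₂ u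
  rw [h1, h2, hb, hx1u, huu] at g1
  have hdet1 := sq_nonneg (x₁ 0*(x₂ 1*u 2 - x₂ 2*u 1) - x₁ 1*(x₂ 0*u 2 - x₂ 2*u 0)
      + x₁ 2*(x₂ 0*u 1 - x₂ 1*u 0))
  have k1 : b^2 - D₁*D₂ ≤ D₁ * (mB x₂ u)^2 := by linarith only [g1, hdet1]
  clear g1 hdet1
  have g2 := gram3 x₂ u w
  rw [h2, huu, hww, hx2w] at g2
  have hdet2 := sq_nonneg (x₂ 0*(u 1*w 2 - u 2*w 1) - x₂ 1*(u 0*w 2 - u 2*w 0)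
      + x₂ 2*(u 0*w 1 - u 1*w 0))
  have k2 : (mB x₂ u)^2 ≤ D₂ * ((mB u w)^2 - 1) := by linarith only [g2, hdet2]
  clear g2 hdet2
  have hmul := mul_le_mul_of_nonneg_left k2 hD1.le
  linarith only [hmul, k1]

/-- If two `b`-linked geodesics `c_{x₁}, c_{x₂}` of positive discriminants `D₁, D₂` do not
intersect (`b² ≥ D₁D₂`, `b > 0`), then their hyperbolic distance `d` (the infimum of the
hyperbolic distances `d(u,w) = arcosh(-B(u,w))` between points `u ∈ c_{x₁}`, `w ∈ c_{x₂}` on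
the hyperboloid sheet) satisfies `cosh d = b/√(D₁D₂)`. -/
theorem stmt7 (x₁ x₂ : Fin 3 → ℝ) (D₁ D₂ b : ℝ)
    (h1 : mB x₁ x₁ = D₁) (h2 : mB x₂ x₂ = D₂) (hD1 : 0 < D₁) (hD2 : 0 < D₂)
    (hb : mB x₁ x₂ = b) (hbpos : 0 < b) (hsep : D₁ * D₂ ≤ b ^ 2) :
    IsGLB {r : ℝ | ∃ u w : Fin 3 → ℝ,
        mB u u = -1 ∧ 0 < u 2 ∧ mB x₁ u = 0 ∧
        mB w w = -1 ∧ 0 < w 2 ∧ mB x₂ w = 0 ∧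
        r = arcosh (-(mB u w))}
      (arcosh (b / Real.sqrt (D₁ * D₂))) := by
  have hsq0 : 0 < Real.sqrt (D₁*D₂) := Real.sqrt_pos.mpr (by positivity)
  have hsq2 : (Real.sqrt (D₁*D₂))^2 = D₁*D₂ := Real.sq_sqrt (by positivity)
  set c := b / Real.sqrt (D₁*D₂) with hc
  have hcpos : 0 < c := by positivity
  have hcsq : c^2 * (D₁*D₂) = b^2 := by
    rw [hc, div_pow, hsq2]; field_simp
  have hc1 : 1 ≤ c := by
    by_contra hlt
    push_neg at hlt
    have hcc : c^2 < 1 := by nlinarith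
    nlinarith [mul_pos hD1 hD2, hcc, hcsq, hsep]
  constructor
  · -- lower bound
    rintro r ⟨u, w, huu, hu2, hx1u, hww, hw2, hx2w, hr⟩
    obtain ⟨k3, hm⟩ := lowerBound x₁ x₂ D₁ D₂ b h1 h2 hD1 hD2 hb
      u w huu hu2 hx1u hww hw2 hx2w
    have hDD : (0:ℝ) < D₁*D₂ := by positivity
    have hc2m : c^2 ≤ (mB u w)^2 := by
      rw [← mul_le_mul_iff_of_pos_right hDD]
      linarith only [k3, hcsq]
    have hcm : c ≤ -(mB u w) := by nlinarith [hc2m, hm, hcpos]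
    rw [hr]
    exact arcosh_mono hc1 hcm
  · -- greatest lower bound
    intro lb hlb
    rcases lt_or_eq_of_le hsep with hE | hE
    · -- non-asymptotic case : distance attained
      set E := b^2 - D₁*D₂ with hEdef
      have hEpos : 0 < E := by rw [hEdef]; linarith
      set p : Fin 3 → ℝ := fun i => b * x₁ i - D₁ * x₂ i with hpdef
      have hpp : mB p p = -(D₁*E) := by
        have e : mB p p = b^2 * mB x₁ x₁ - 2*b*D₁* mB x₁ x₂ + D₁^2 * mB x₂ x₂ := by
          simp only [hpdef, mB]; ring
        rw [e, h1, h2, hb, hEdef]; ring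
      have hx1p : mB x₁ p = 0 := by
        have e : mB x₁ p = b * mB x₁ x₁ - D₁ * mB x₁ x₂ := by
          simp only [hpdef, mB]; ring
        rw [e, h1, hb]; ring
      have hx2p : mB x₂ p = E := by
        have e : mB x₂ p = b * mB x₁ x₂ - D₁ * mB x₂ x₂ := by
          simp only [hpdef, mB]; ring
        rw [e, hb, h2, hEdef]; ring
      have hDE : 0 < D₁ * E := by positivity
      set N₁ := Real.sqrt (D₁*E) with hN₁
      have hN₁pos : 0 < N₁ := Real.sqrt_pos.mpr hDE
      have hN₁2 : N₁^2 = D₁*E := Real.sq_sqrt hDE.le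
      have hN₁ne : N₁ ≠ 0 := ne_of_gt hN₁pos
      have hp2 : p 2 ≠ 0 := by
        intro h0
        have e : mB p p = p 0 * p 0 + p 1 * p 1 - p 2 * p 2 := rfl
        rw [hpp, h0] at e
        have := sq_nonneg (p 0)
        have := sq_nonneg (p 1)
        have : (0:ℝ) < D₁ * E := hDE
        linarith only [e, sq_nonneg (p 0), sq_nonneg (p 1), hDE]
      obtain ⟨s, hs2, hsp2⟩ : ∃ s : ℝ, s^2 = 1 ∧ 0 < s * p 2 := by
        rcases lt_trichotomy (p 2) 0 with h|h|h
        · exact ⟨-1, by norm_num, by linarith only [h]⟩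
        · exact absurd h hp2
        · exact ⟨1, by norm_num, by linarith only [h]⟩
      set u : Fin 3 → ℝ := fun i => (s/N₁) * p i with hudef
      have huu : mB u u = -1 := by
        have e : mB u u = (s/N₁)^2 * mB p p := by simp only [hudef, mB]; ring
        rw [e, hpp, div_pow, hs2, hN₁2]
        field_simp
      have hu2 : 0 < u 2 := by
        have e : u 2 = (s * p 2)/N₁ := by simp only [hudef]; ring
        rw [e]; positivity
      have hx1u : mB x₁ u = 0 := by
        have e : mB x₁ u = (s/N₁) * mB x₁ p := by simp only [hudef, mB]; ring
        rw [e, hx1p, mul_zero]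
      have hτ2 : (mB x₂ u)^2 = E/D₁ := by
        have e : mB x₂ u = (s/N₁) * mB x₂ p := by simp only [hudef, mB]; ring
        rw [e, hx2p, mul_pow, div_pow, hs2, hN₁2]
        field_simp
      obtain ⟨w, hww, hw2, hx2w, hfoot⟩ := foot x₂ D₂ h2 hD2 u huu hu2
      have hval : Real.sqrt (1 + (mB x₂ u)^2/D₂) = c := by
        rw [hτ2]
        have e : 1 + E/D₁/D₂ = b^2/(D₁*D₂) := by
          rw [hEdef]; field_simp; ring
        rw [e, Real.sqrt_div (sq_nonneg b), Real.sqrt_sq hbpos.le, hc]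
      refine hlb ⟨u, w, huu, hu2, hx1u, hww, hw2, hx2w, ?_⟩
      rw [hfoot, hval]
    · -- asymptotic case : D₁D₂ = b², infimum is 0
      have hsb : Real.sqrt (D₁*D₂) = b := by rw [hE]; exact Real.sqrt_sq hbpos.le
      have hc1' : c = 1 := by rw [hc, hsb]; field_simp
      rw [hc1', arcosh_one]
      by_contra hpos
      push_neg at hpos
      set d := min lb 1 with hddef
      have hd : 0 < d := lt_min hpos one_pos
      have hd1 : d ≤ 1 := min_le_right _ _
      have hdlb : d ≤ lb := min_le_left _ _
      -- base point u₀ on the geodesic c_{x₁}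
      have h1' : x₁ 0 * x₁ 0 + x₁ 1 * x₁ 1 - x₁ 2 * x₁ 2 = D₁ := h1
      set v : Fin 3 → ℝ := fun i =>
        if i = 0 then x₁ 0 * x₁ 2 else if i = 1 then x₁ 1 * x₁ 2 else x₁ 0^2 + x₁ 1^2
        with hvdef
      have hv0 : v 0 = x₁ 0 * x₁ 2 := by simp [hvdef]
      have hv1 : v 1 = x₁ 1 * x₁ 2 := by simp [hvdef]
      have hv2e : v 2 = x₁ 0^2 + x₁ 1^2 := by simp [hvdef]
      set M := D₁ * (D₁ + x₁ 2^2) with hMdef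
      have hM : 0 < M := by positivity
      have hvv : mB v v = -M := by
        simp only [mB, hv0, hv1, hv2e, hMdef]
        linear_combination (-(x₁ 0^2 + x₁ 1^2 + D₁)) * h1'
      have hv2 : 0 < v 2 := by rw [hv2e]; nlinarith [h1', sq_nonneg (x₁ 2)]
      have hx1v : mB x₁ v = 0 := by
        simp only [mB, hv0, hv1, hv2e]; ring
      set NM := Real.sqrt M with hNM
      have hNMpos : 0 < NM := Real.sqrt_pos.mpr hM
      have hNM2 : NM^2 = M := Real.sq_sqrt hM.le
      have hNMne : NM ≠ 0 := ne_of_gt hNMpos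
      set u₀ : Fin 3 → ℝ := fun i => (1/NM) * v i with hu₀def
      have huu₀ : mB u₀ u₀ = -1 := by
        have e : mB u₀ u₀ = (1/NM)^2 * mB v v := by simp only [hu₀def, mB]; ring
        rw [e, hvv, ← hNM2]
        field_simp
      have hu₀2 : 0 < u₀ 2 := by
        have e : u₀ 2 = v 2 / NM := by simp only [hu₀def]; ring
        rw [e]; positivity
      have hx1u₀ : mB x₁ u₀ = 0 := by
        have e : mB x₁ u₀ = (1/NM) * mB x₁ v := by simp only [hu₀def, mB]; ring
        rw [e, hx1v, mul_zero]
      -- the common null direction ℓ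
      set l : Fin 3 → ℝ := fun i => b * x₁ i - D₁ * x₂ i with hldef
      have hll : mB l l = 0 := by
        have e : mB l l = b^2 * mB x₁ x₁ - 2*b*D₁* mB x₁ x₂ + D₁^2 * mB x₂ x₂ := by
          simp only [hldef, mB]; ring
        rw [e, h1, h2, hb]
        linear_combination D₁ * hE
      have hx1l : mB x₁ l = 0 := by
        have e : mB x₁ l = b * mB x₁ x₁ - D₁ * mB x₁ x₂ := by
          simp only [hldef, mB]; ring
        rw [e, h1, hb]; ring
      have hx2l : mB x₂ l = 0 := by
        have e : mB x₂ l = b * mB x₁ x₂ - D₁ * mB x₂ x₂ := by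
          simp only [hldef, mB]; ring
        rw [e, hb, h2]
        linear_combination -hE
      set β := mB u₀ l with hβdef
      have hA : D₁ * mB x₂ u₀ = -β := by
        have e : mB l u₀ = b * mB x₁ u₀ - D₁ * mB x₂ u₀ := by
          simp only [hldef, mB]; ring
        rw [hx1u₀] at e
        rw [hβdef, mB_comm u₀ l, e]; ring
      have hβl : β * l 2 ≤ 0 := by
        have e1 : u₀ 0^2 + u₀ 1^2 - u₀ 2^2 < 0 := by
          have : mB u₀ u₀ = u₀ 0 * u₀ 0 + u₀ 1 * u₀ 1 - u₀ 2 * u₀ 2 := rfl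
          rw [huu₀] at this; linarith only [this]
        have e2 : l 0^2 + l 1^2 = l 2^2 := by
          have : mB l l = l 0 * l 0 + l 1 * l 1 - l 2 * l 2 := rfl
          rw [hll] at this; linarith only [this]
        have := tn (u₀ 0) (u₀ 1) (u₀ 2) (l 0) (l 1) (l 2) e1 hu₀2 e2
        have e3 : β = u₀ 0 * l 0 + u₀ 1 * l 1 - u₀ 2 * l 2 := rfl
        rw [e3]; exact this
      -- the point far along the geodesic
      set ν := 8/(d^2*D₁^2*D₂) with hνdef
      have hν : 0 < ν := by rw [hνdef]; positivity
      have hNarg : (0:ℝ) < 1 + 2*ν*β^2 := by positivity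
      set N := Real.sqrt (1 + 2*ν*β^2) with hNdef
      have hNpos : 0 < N := Real.sqrt_pos.mpr hNarg
      have hN2 : N^2 = 1 + 2*ν*β^2 := Real.sq_sqrt hNarg.le
      have hNne : N ≠ 0 := ne_of_gt hNpos
      set uh : Fin 3 → ℝ := fun i => (1/N) * u₀ i - (ν*β/N) * l i with huhdef
      have huhuh : mB uh uh = -1 := by
        have e : mB uh uh = (1/N)^2 * mB u₀ u₀ - 2*(1/N)*(ν*β/N) * mB u₀ l
            + (ν*β/N)^2 * mB l l := by
          simp only [huhdef, mB]; ring
        rw [e, huu₀, ← hβdef, hll]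
        field_simp
        linear_combination hN2
      have huh2 : 0 < uh 2 := by
        have e : uh 2 = (u₀ 2 - ν*(β*l 2))/N := by simp only [huhdef]; ring
        rw [e]
        have h9 : 0 ≤ ν*(-(β*l 2)) := mul_nonneg hν.le (by linarith only [hβl])
        have : 0 < u₀ 2 - ν*(β*l 2) := by linarith only [hu₀2, h9]
        positivity
      have hx1uh : mB x₁ uh = 0 := by
        have e : mB x₁ uh = (1/N) * mB x₁ u₀ - (ν*β/N) * mB x₁ l := by
          simp only [huhdef, mB]; ring
        rw [e, hx1u₀, hx1l]; ring
      have hτ2 : (mB x₂ uh)^2 = β^2/(D₁^2*N^2) := by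
        have e : mB x₂ uh = (1/N) * mB x₂ u₀ - (ν*β/N) * mB x₂ l := by
          simp only [huhdef, mB]; ring
        have e3 : mB x₂ uh = (1/N) * mB x₂ u₀ := by rw [e, hx2l]; ring
        have e4 : D₁^2 * (mB x₂ u₀)^2 = β^2 := by
          linear_combination (D₁ * mB x₂ u₀ - β) * hA
        have e5 : (mB x₂ u₀)^2 = β^2/D₁^2 := by
          rw [eq_div_iff (by positivity)]
          linarith only [e4]
        rw [e3, mul_pow, e5]
        rw [div_pow, one_pow]
        field_simp
      obtain ⟨w, hww, hw2, hx2w, hfoot⟩ := foot x₂ D₂ h2 hD2 uh huhuh huh2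
      set δ := (mB x₂ uh)^2/D₂ with hδdef
      have hδ0 : 0 ≤ δ := by positivity
      have hK : (0:ℝ) < D₁^2*D₂*N^2 := by positivity
      have hδval : δ * (D₁^2*D₂*N^2) = β^2 := by
        rw [hδdef, hτ2]
        have hne : D₁^2*N^2 ≠ 0 := by positivity
        field_simp
      have h16 : 16*β^2 ≤ d^2*(D₁^2*D₂*N^2) := by
        have e : d^2*(D₁^2*D₂*N^2) = d^2*D₁^2*D₂ + 16*β^2 := by
          rw [hN2, hνdef]
          field_simp
          ring
        have h9 : (0:ℝ) ≤ d^2*D₁^2*D₂ := by positivity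
        linarith only [e, h9]
      have hδle : δ ≤ d^2/16 := by
        rw [← mul_le_mul_iff_of_pos_right hK, hδval]
        linarith only [h16]
      have hsδ : Real.sqrt δ ≤ d/4 := by
        have e : Real.sqrt (d^2/16) = d/4 := by
          rw [show d^2/16 = (d/4)^2 by ring, Real.sqrt_sq (by positivity)]
        calc Real.sqrt δ ≤ Real.sqrt (d^2/16) := Real.sqrt_le_sqrt hδle
          _ = d/4 := e
      have hmem : lb ≤ arcosh (Real.sqrt (1 + δ)) := by
        refine hlb ⟨uh, w, huhuh, huh2, hx1uh, hww, hw2, hx2w, ?_⟩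
        rw [← hfoot]
      have hbound := arcosh_sqrt_le hδ0
      have hdd : d^2 ≤ d := by
        have := mul_le_mul_of_nonneg_right hd1 hd.le
        linarith only [this]
      linarith only [hmem, hbound, hsδ, hδle, hd, hdd, hdlb]
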